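/- Suppose there exists w₀ ∈ ℚ^d with F_σ(w₀) = −1 for every σ ∈ ℱ (the ℚ-Gorenstein case). Then for every positive rational number α and every lattice point v ∈ C ∩ ℤ^d, the following are equivalent: (1) there exists w ∈ ℚ^d with F_σ(w) ≥ −1 for all σ ∈ ℱ and v − w ∈ interior(α·P_I); (2) F(v) + e lies in the relative (intrinsic) interior of α·P_{F(I)}. (This is the combinatorial content of the toric Howald formula 𝒥(X, αI) = ⟨ y^v : F(v)+e ∈ relint(α P_{F(I)}) ⟩ in the ℚ-Gorenstein case.) -/

import Mathlib

open Pointwise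

/-- The real vector in `ℝ^d` obtained from an integer lattice point. -/
def castR {d : ℕ} (v : Fin d → ℤ) : Fin d → ℝ := fun i => (v i : ℝ)

/-- The cone `C = {p ∈ ℝ^d : F_σ(p) ≥ 0 for all σ ∈ ℱ}`. -/
def coneC {d : ℕ} {ℱ : Type} (Fσ : ℱ → ((Fin d → ℝ) →ₗ[ℝ] ℝ)) : Set (Fin d → ℝ) :=
  {p | ∀ σ, 0 ≤ Fσ σ p}

/-- The linear map `F : ℝ^d → ℝ^ℱ`, `F(p) = (F_σ(p))_σ`. -/
noncomputable def Fmap {d : ℕ} {ℱ : Type} (Fσ : ℱ → ((Fin d → ℝ) →ₗ[ℝ] ℝ)) :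
    (Fin d → ℝ) →ₗ[ℝ] (ℱ → ℝ) :=
  LinearMap.pi Fσ

/-- The nonnegative orthant `ℝ_{≥0}^ℱ`. -/
def orthant (ℱ : Type) : Set (ℱ → ℝ) := {x | ∀ σ, 0 ≤ x σ}

/-- The Newton polyhedron `P_I = conv(⋃ᵢ (βᵢ + C)) ⊆ ℝ^d`. -/
noncomputable def newtonPI {d r : ℕ} {ℱ : Type} (Fσ : ℱ → ((Fin d → ℝ) →ₗ[ℝ] ℝ))
    (β : Fin r → (Fin d → ℤ)) : Set (Fin d → ℝ) :=
  convexHull ℝ (⋃ i, castR (β i) +ᵥ coneC Fσ)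

/-- The Newton polyhedron `P_{F(I)} = conv(⋃ᵢ (F(βᵢ) + F(C))) ⊆ ℝ^ℱ`. -/
noncomputable def newtonPFI {d r : ℕ} {ℱ : Type} (Fσ : ℱ → ((Fin d → ℝ) →ₗ[ℝ] ℝ))
    (β : Fin r → (Fin d → ℤ)) : Set (ℱ → ℝ) :=
  convexHull ℝ (⋃ i, Fmap Fσ (castR (β i)) +ᵥ (Fmap Fσ '' coneC Fσ))

/-- The Newton polyhedron `P_J = conv(⋃ᵢ (F(βᵢ) + ℝ_{≥0}^ℱ)) ⊆ ℝ^ℱ`. -/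
noncomputable def newtonPJ {d r : ℕ} {ℱ : Type} (Fσ : ℱ → ((Fin d → ℝ) →ₗ[ℝ] ℝ))
    (β : Fin r → (Fin d → ℤ)) : Set (ℱ → ℝ) :=
  convexHull ℝ (⋃ i, Fmap Fσ (castR (β i)) +ᵥ orthant ℱ)

/-- A vector of `ℝ^d` with all coordinates rational (`w ∈ ℚ^d`). -/
def isRatVec {d : ℕ} (w : Fin d → ℝ) : Prop := ∀ i, ∃ q : ℚ, w i = (q : ℝ)

lemma relint_image {E F : Type*} [NormedAddCommGroup E] [NormedSpace ℝ E] [FiniteDimensional ℝ E]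
    [NormedAddCommGroup F] [NormedSpace ℝ F]
    (f : E →ₗ[ℝ] F) (hf : Function.Injective f) (S : Set E) (hS : affineSpan ℝ S = ⊤) :
    intrinsicInterior ℝ (f '' S) = f '' interior S := by
  have hspan : ((affineSpan ℝ (f '' S) : AffineSubspace ℝ F) : Set F) = Set.range f := by
    have h1 : f '' S = f.toAffineMap '' S := rfl
    rw [h1, ← AffineSubspace.map_span f.toAffineMap S, hS]
    ext y
    simp [AffineSubspace.mem_map]
  let e : E ≃L[ℝ] LinearMap.range f := (LinearEquiv.ofInjective f hf).toContinuousLinearEquiv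
  have hrange : (LinearMap.range f : Set F) = ((affineSpan ℝ (f '' S) : AffineSubspace ℝ F) : Set F) := by
    rw [hspan]; rfl
  let H : E ≃ₜ ((affineSpan ℝ (f '' S) : AffineSubspace ℝ F) : Set F) :=
    e.toHomeomorph.trans (Homeomorph.setCongr hrange)
  have hH : ∀ x : E, ((H x : F)) = f x := by intro x; rfl
  have hpre : ((↑) ⁻¹' (f '' S) : Set (affineSpan ℝ (f '' S))) = ⇑H '' S := by
    ext y
    constructor
    · intro hy
      obtain ⟨x, hx, hfx⟩ := hy
      exact ⟨x, hx, Subtype.ext (by rw [hH, hfx])⟩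
    · rintro ⟨x, hx, rfl⟩
      show (H x : F) ∈ f '' S
      rw [hH]
      exact ⟨x, hx, rfl⟩
  rw [intrinsicInterior, hpre, ← H.image_interior, Set.image_image]
  exact Set.image_congr fun x _ => hH x

section main
variable {d : ℕ} {ℱ : Type} {Fσ : ℱ → ((Fin d → ℝ) →ₗ[ℝ] ℝ)}

lemma coneC_add {a b : Fin d → ℝ} (ha : a ∈ coneC Fσ) (hb : b ∈ coneC Fσ) :
    a + b ∈ coneC Fσ := fun σ => by
  rw [map_add]; exact add_nonneg (ha σ) (hb σ)

lemma coneC_smul {a : Fin d → ℝ} (ha : a ∈ coneC Fσ) {c : ℝ} (hc : 0 ≤ c) :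
    c • a ∈ coneC Fσ := fun σ => by
  rw [map_smul]; exact mul_nonneg hc (ha σ)

lemma newtonPI_add_cone {r : ℕ} (β : Fin r → (Fin d → ℤ)) {x c : Fin d → ℝ}
    (hx : x ∈ newtonPI Fσ β) (hc : c ∈ coneC Fσ) : x + c ∈ newtonPI Fσ β := by
  have hsub : c +ᵥ (⋃ i, castR (β i) +ᵥ coneC Fσ) ⊆ ⋃ i, castR (β i) +ᵥ coneC Fσ := by
    rintro y ⟨z, hz, rfl⟩
    obtain ⟨i, hi⟩ := Set.mem_iUnion.mp hz
    obtain ⟨c₀, hc₀, rfl⟩ := hi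
    refine Set.mem_iUnion.mpr ⟨i, ⟨c + c₀, coneC_add hc hc₀, ?_⟩⟩
    simp only [vadd_eq_add]; abel
  have h1 : x + c ∈ c +ᵥ newtonPI Fσ β := ⟨x, hx, by simp [vadd_eq_add, add_comm]⟩
  rw [newtonPI, ← convexHull_vadd] at h1
  exact convexHull_mono hsub h1
end main


/-- in the ℚ-Gorenstein case, for every positive rational `α` and every lattice
point `v ∈ C ∩ ℤ^d`, there exists `w ∈ ℚ^d` with `F_σ(w) ≥ -1` for all `σ` and
`v - w ∈ interior(α P_I)` iff `F(v) + e ∈ relint(α P_{F(I)})`. -/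
theorem stmt9 (d : ℕ) (hd : 1 ≤ d) (ℱ : Type) [Fintype ℱ] [Nonempty ℱ]
    (Fσ : ℱ → ((Fin d → ℝ) →ₗ[ℝ] ℝ))
    (hFint : ∀ σ (v : Fin d → ℤ), ∃ z : ℤ, Fσ σ (castR v) = z)
    (hFsurj : ∀ σ (z : ℤ), ∃ v : Fin d → ℤ, Fσ σ (castR v) = z)
    (hFinj : Function.Injective (Fmap Fσ))
    (hfull : (interior (coneC Fσ)).Nonempty)
    (r : ℕ) (hr : 1 ≤ r) (β : Fin r → (Fin d → ℤ))
    (hβ : ∀ i, castR (β i) ∈ coneC Fσ)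
    (w₀ : Fin d → ℝ) (hw₀rat : isRatVec w₀) (hw₀ : ∀ σ, Fσ σ w₀ = -1)
    (α : ℚ) (hα : 0 < α)
    (v : Fin d → ℤ) (hv : castR v ∈ coneC Fσ) :
    (∃ w : Fin d → ℝ, isRatVec w ∧ (∀ σ, -1 ≤ Fσ σ w) ∧
        castR v - w ∈ interior ((α : ℝ) • newtonPI Fσ β)) ↔
      Fmap Fσ (castR v) + (fun _ => 1) ∈
        intrinsicInterior ℝ ((α : ℝ) • newtonPFI Fσ β) := by
  set f := Fmap Fσ with hf
  have hα' : (0 : ℝ) < (α : ℝ) := by exact_mod_cast hα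
  -- P_{F(I)} is the image of P_I
  have hvadd : ∀ (a : Fin d → ℝ) (s : Set (Fin d → ℝ)), f '' (a +ᵥ s) = f a +ᵥ (f '' s) := by
    intro a s
    ext y
    constructor
    · rintro ⟨x, ⟨b, hb, rfl⟩, rfl⟩
      exact ⟨f b, Set.mem_image_of_mem _ hb, by simp [vadd_eq_add, map_add]⟩
    · rintro ⟨z, ⟨b, hb, rfl⟩, rfl⟩
      exact ⟨a + b, ⟨b, hb, rfl⟩, by simp [vadd_eq_add, map_add]⟩
  have hPFI : newtonPFI Fσ β = f '' newtonPI Fσ β := by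
    rw [newtonPFI, newtonPI, f.image_convexHull, Set.image_iUnion]
    simp_rw [hvadd]
    rfl
  have hsmul : (α : ℝ) • (f '' newtonPI Fσ β) = f '' ((α : ℝ) • newtonPI Fσ β) := by
    ext y
    constructor
    · rintro ⟨z, ⟨x, hx, rfl⟩, rfl⟩
      exact ⟨(α : ℝ) • x, ⟨x, hx, rfl⟩, map_smul f _ _⟩
    · rintro ⟨z, ⟨x, hx, rfl⟩, rfl⟩
      exact ⟨f x, ⟨x, hx, rfl⟩, (map_smul f _ _).symm⟩
  -- full-dimensionality
  have hPIint : (interior (newtonPI Fσ β)).Nonempty := by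
    obtain ⟨c, hc⟩ := hfull
    refine ⟨castR (β ⟨0, hr⟩) +ᵥ c, ?_⟩
    have h1 : castR (β ⟨0, hr⟩) +ᵥ interior (coneC Fσ) ⊆ interior (newtonPI Fσ β) := by
      rw [← interior_vadd]
      exact interior_mono ((Set.subset_iUnion (fun i => castR (β i) +ᵥ coneC Fσ) ⟨0, hr⟩).trans
        (subset_convexHull ℝ _))
    exact h1 ⟨c, hc, rfl⟩
  have hspanTop : affineSpan ℝ ((α : ℝ) • newtonPI Fσ β) = ⊤ := by
    have hconv : Convex ℝ ((α : ℝ) • newtonPI Fσ β) :=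
      (convex_convexHull ℝ _).smul _
    rw [← hconv.interior_nonempty_iff_affineSpan_eq_top, interior_smul₀ (ne_of_gt hα')]
    exact hPIint.smul_set
  have hrel : intrinsicInterior ℝ ((α : ℝ) • newtonPFI Fσ β)
      = f '' interior ((α : ℝ) • newtonPI Fσ β) := by
    rw [hPFI, hsmul, relint_image f hFinj _ hspanTop]
  have hfe : f (castR v - w₀) = Fmap Fσ (castR v) + (fun _ => 1) := by
    funext σ
    simp only [map_sub, hf, Fmap, LinearMap.pi_apply, Pi.sub_apply, Pi.add_apply, hw₀ σ]
    ring
  rw [hrel, ← hfe]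
  have hmem : f (castR v - w₀) ∈ f '' interior ((α : ℝ) • newtonPI Fσ β)
      ↔ castR v - w₀ ∈ interior ((α : ℝ) • newtonPI Fσ β) := by
    constructor
    · rintro ⟨x, hx, hxe⟩
      rwa [← hFinj hxe]
    · intro h
      exact ⟨_, h, rfl⟩
  rw [hmem]
  -- closedness of interior under adding cone elements
  have hadd : ∀ c ∈ coneC Fσ, ∀ x ∈ interior ((α : ℝ) • newtonPI Fσ β),
      x + c ∈ interior ((α : ℝ) • newtonPI Fσ β) := by
    intro c hc x hx
    have hsub : c +ᵥ ((α : ℝ) • newtonPI Fσ β) ⊆ (α : ℝ) • newtonPI Fσ β := by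
      rintro y ⟨z, ⟨p, hp, rfl⟩, rfl⟩
      refine ⟨p + (α : ℝ)⁻¹ • c, newtonPI_add_cone β hp (coneC_smul hc (by positivity)), ?_⟩
      simp only [vadd_eq_add, smul_add, smul_smul, mul_inv_cancel₀ (ne_of_gt hα'), one_smul]
      abel
    have h1 : x + c ∈ c +ᵥ interior ((α : ℝ) • newtonPI Fσ β) :=
      ⟨x, hx, by simp [vadd_eq_add, add_comm]⟩
    rw [← interior_vadd] at h1
    exact interior_mono hsub h1
  constructor
  · rintro ⟨w, _, hw1, hw2⟩
    have hc : w - w₀ ∈ coneC Fσ := fun σ => by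
      rw [map_sub, hw₀ σ]
      linarith [hw1 σ]
    have : castR v - w₀ = (castR v - w) + (w - w₀) := by abel
    rw [this]
    exact hadd _ hc _ hw2
  · intro h
    exact ⟨w₀, hw₀rat, fun σ => le_of_eq (hw₀ σ).symm, h⟩
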